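/- The face F_{T₁} := {f ∈ P : the coefficients of x⁴ and of x²z² in f are zero} of the cone P is not exposed: there is no linear functional L : H₄ → ℝ with L(h) ≥ 0 for all h ∈ P and F_{T₁} = {h ∈ P : L(h) = 0}. -/

import Mathlib

open MvPolynomial

noncomputable section

/-- The space of ternary (3-variable) real polynomials. `H d` corresponds to the
homogeneous polynomials of degree `d` via the predicate `IsHomogeneous`. -/
abbrev MvP : Type := MvPolynomial (Fin 3) ℝ

/-- The cone `P` of nonnegative ternary quartics. -/
def Pcone : Set MvP :=
  {f | f.IsHomogeneous 4 ∧ ∀ a : Fin 3 → ℝ, 0 ≤ eval a f}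

/-- `F` is a face of the cone `P`. -/
def IsFace (F : Set MvP) : Prop :=
  F ⊆ Pcone ∧
  (∀ a ∈ F, ∀ b ∈ F, a + b ∈ F) ∧
  (∀ c : ℝ, 0 ≤ c → ∀ a ∈ F, c • a ∈ F) ∧
  (∀ a ∈ Pcone, ∀ b ∈ Pcone, a + b ∈ F → a ∈ F ∧ b ∈ F)

/-- `J_F = {q ∈ H₂ : q² ∈ F}`. -/
def Jset (F : Set MvP) : Set MvP :=
  {q | q.IsHomogeneous 2 ∧ q ^ 2 ∈ F}

/-- `F` is an exposed face of `P`. -/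
def ExposedFace (F : Set MvP) : Prop :=
  ∃ L : MvP →ₗ[ℝ] ℝ, (∀ h ∈ Pcone, 0 ≤ L h) ∧ F = {h ∈ Pcone | L h = 0}

/-- The face `F_{T₁}`: quartics in `P` whose coefficients of `x⁴` and `x²z²` vanish. -/
def FT1 : Set MvP :=
  {f ∈ Pcone | coeff (Finsupp.single (0 : Fin 3) 4) f = 0 ∧
    coeff (Finsupp.single (0 : Fin 3) 2 + Finsupp.single (2 : Fin 3) 2) f = 0}

/-- Scalar multiples of homogeneous polynomials are homogeneous. -/
lemma isHomog_smul (c : ℝ) {f : MvP} {n : ℕ} (hf : f.IsHomogeneous n) :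
    (c • f).IsHomogeneous n := by
  rw [smul_eq_C_mul]
  exact hf.C_mul c

lemma x4_homog : (X (0 : Fin 3) ^ 4 : MvP).IsHomogeneous 4 := isHomogeneous_X_pow 0 4

lemma z4_homog : (X (2 : Fin 3) ^ 4 : MvP).IsHomogeneous 4 := isHomogeneous_X_pow 2 4

lemma x2z2_homog : (X (0 : Fin 3) ^ 2 * X (2 : Fin 3) ^ 2 : MvP).IsHomogeneous 4 :=
  (isHomogeneous_X_pow 0 2).mul (isHomogeneous_X_pow 2 2)

lemma x4_mem : (X (0 : Fin 3) ^ 4 : MvP) ∈ Pcone := by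
  refine ⟨x4_homog, fun a => ?_⟩
  simp only [map_pow, eval_X]
  positivity

lemma x2z2_mem : (X (0 : Fin 3) ^ 2 * X (2 : Fin 3) ^ 2 : MvP) ∈ Pcone := by
  refine ⟨x2z2_homog, fun a => ?_⟩
  simp only [map_mul, map_pow, eval_X]
  positivity

/-- `z⁴` belongs to the face `F_{T₁}`. -/
lemma z4_mem_FT1 : (X (2 : Fin 3) ^ 4 : MvP) ∈ FT1 := by
  refine ⟨⟨z4_homog, fun a => ?_⟩, ?_, ?_⟩
  · simp only [map_pow, eval_X]; positivity
  · rw [X_pow_eq_monomial, coeff_monomial, if_neg]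
    intro h
    have := DFunLike.congr_fun h (2 : Fin 3)
    simp [Finsupp.single_apply] at this
  · rw [X_pow_eq_monomial, coeff_monomial, if_neg]
    intro h
    have := DFunLike.congr_fun h (0 : Fin 3)
    simp [Finsupp.single_apply] at this

/-- The "AM-GM" quartic `ε x⁴ - 2 x²z² + ε⁻¹ z⁴` is in the cone, for `ε > 0`. -/
lemma amgm_mem {ε : ℝ} (hε : 0 < ε) :
    (ε • (X (0 : Fin 3) ^ 4) + (-2 : ℝ) • (X (0 : Fin 3) ^ 2 * X (2 : Fin 3) ^ 2)
      + ε⁻¹ • (X (2 : Fin 3) ^ 4) : MvP) ∈ Pcone := by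
  constructor
  · exact ((isHomog_smul ε x4_homog).add (isHomog_smul _ x2z2_homog)).add
      (isHomog_smul _ z4_homog)
  · intro a
    simp only [map_add, smul_eval, map_mul, map_pow, eval_X]
    have h3 : ε * (ε * a 0 ^ 4 + -2 * (a 0 ^ 2 * a 2 ^ 2) + ε⁻¹ * a 2 ^ 4)
        = (ε * a 0 ^ 2 - a 2 ^ 2) ^ 2 := by
      field_simp
      ring
    nlinarith [sq_nonneg (ε * a 0 ^ 2 - a 2 ^ 2), h3, hε]

/-- the face `F_{T₁}` of `P` is not exposed. -/
theorem stmt_18 : ¬ ExposedFace FT1 := by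
  rintro ⟨L, hL, hF⟩
  set A : MvP := X (0 : Fin 3) ^ 4 with hA
  set B : MvP := X (0 : Fin 3) ^ 2 * X (2 : Fin 3) ^ 2 with hB
  set Z : MvP := X (2 : Fin 3) ^ 4 with hZ
  have hZ0 : L Z = 0 := by
    have := z4_mem_FT1
    rw [hF] at this
    exact this.2
  have hBnn : 0 ≤ L B := hL B x2z2_mem
  have hAnn : 0 ≤ L A := hL A x4_mem
  -- key inequality: for all ε > 0, 2 * L B ≤ ε * L A
  have key : ∀ ε : ℝ, 0 < ε → 2 * L B ≤ ε * L A := by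
    intro ε hε
    have h := hL _ (amgm_mem hε)
    simp only [map_add, map_smul, smul_eq_mul, hZ0, mul_zero, add_zero] at h
    rw [← hA, ← hB, ← hZ, hZ0, mul_zero, add_zero] at h
    linarith
  have hB0 : L B = 0 := by
    refine le_antisymm ?_ hBnn
    by_contra h
    push_neg at h
    have h1 := key (L B / (L A + 1)) (by positivity)
    have h2 : L B / (L A + 1) * L A < L B := by
      rw [div_mul_eq_mul_div, div_lt_iff₀ (by linarith)]
      nlinarith
    linarith
  -- hence B ∈ FT1, contradicting its x²z² coefficient being 1
  have hBF : B ∈ FT1 := by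
    rw [hF]
    exact ⟨x2z2_mem, hB0⟩
  have hc := hBF.2.2
  rw [hB] at hc
  rw [X_pow_eq_monomial, X_pow_eq_monomial, monomial_mul, one_mul, coeff_monomial,
    if_pos rfl] at hc
  exact one_ne_zero hc

end
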